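/- Zero-mass property of generalized eigenfunctions of the coupled Burgers–linear degenerate model (equation (zeromass) in the proof of Proposition 5.3): Let ξ₂ ∈ ℝ and λ ∈ ℂ with Re λ ≥ 0 and (ξ₂, λ) ≠ (0, 0). Suppose w : ℝ → ℂ² is twice continuously differentiable, each component of w is integrable on ℝ, w(x) → 0 and w'(x) → 0 as x → ±∞, and w satisfies (λ I + iξ₂ A² + ξ₂² B²²) w + (A¹ w)' + iξ₂ (B¹² + B²¹) w' = B¹¹ w'' for all x ∈ ℝ. Then (λ I + iξ₂ A² + ξ₂² B²²) ∫_ℝ w(x) dx = 0, and consequently ∫_ℝ w(x) dx = 0. -/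

import Mathlib

open MeasureTheory Matrix Filter

/-- **Zero-mass property of generalized eigenfunctions of the coupled Burgers–linear
degenerate model** (equation (zeromass) in the proof of Proposition 5.3): any integrable
generalized eigenfunction `w`, decaying together with `w'` at `±∞`, satisfies
`(λI + iξ₂A² + ξ₂²B²²) ∫ w = 0`, and consequently `∫ w = 0`. -/
theorem coupled_burgers_degenerate_zero_mass
    (ε a : ℝ) (hε : 0 < ε) (ha : 0 < a)
    (B : Fin 2 → Fin 2 → Matrix (Fin 2) (Fin 2) ℝ)
    (hBdiag : ∀ j k, (B j k).IsDiag)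
    (hB11 : B 0 0 0 0 = 1)
    (hpar : ∃ θ > (0 : ℝ), ∀ ξ : Fin 2 → ℝ,
      θ * (ξ 0 ^ 2 + ξ 1 ^ 2) ≤ ∑ j, ∑ k, ξ j * ξ k * B j k 0 0 ∧
      0 ≤ ∑ j, ∑ k, ξ j * ξ k * B j k 1 1)
    (ξ₂ : ℝ) (lam : ℂ) (hre : 0 ≤ lam.re) (hne : ¬ (ξ₂ = 0 ∧ lam = 0))
    (w : ℝ → (Fin 2 → ℂ)) (hw : ContDiff ℝ 2 w)
    (hwInt : ∀ i, Integrable (fun x => w x i) volume)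
    (hw0 : Tendsto w atTop (nhds 0)) (hw0' : Tendsto w atBot (nhds 0))
    (hdw0 : Tendsto (deriv w) atTop (nhds 0)) (hdw0' : Tendsto (deriv w) atBot (nhds 0))
    (heq : ∀ x : ℝ,
      (lam • (1 : Matrix (Fin 2) (Fin 2) ℂ)
          + (Complex.I * (ξ₂ : ℂ)) • (!![0, 1; 1, 0] : Matrix (Fin 2) (Fin 2) ℂ)
          + ((ξ₂ : ℂ) ^ 2) • (B 1 1).map Complex.ofReal) *ᵥ w x
        + deriv (fun y =>
            (Matrix.diagonal ![((-ε * Real.tanh (ε * y / 2) : ℝ) : ℂ), (a : ℂ)]) *ᵥ w y) x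
        + (Complex.I * (ξ₂ : ℂ)) • (((B 0 1 + B 1 0).map Complex.ofReal) *ᵥ deriv w x)
        = ((B 0 0).map Complex.ofReal) *ᵥ deriv (deriv w) x) :
    (lam • (1 : Matrix (Fin 2) (Fin 2) ℂ)
        + (Complex.I * (ξ₂ : ℂ)) • (!![0, 1; 1, 0] : Matrix (Fin 2) (Fin 2) ℂ)
        + ((ξ₂ : ℂ) ^ 2) • (B 1 1).map Complex.ofReal) *ᵥ (fun i => ∫ x : ℝ, w x i) = 0
      ∧ (fun i => ∫ x : ℝ, w x i) = 0 := by
  classical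
  obtain ⟨θ, hθ, hpar'⟩ := hpar
  set M : Matrix (Fin 2) (Fin 2) ℂ :=
    lam • (1 : Matrix (Fin 2) (Fin 2) ℂ)
      + (Complex.I * (ξ₂ : ℂ)) • (!![0, 1; 1, 0] : Matrix (Fin 2) (Fin 2) ℂ)
      + ((ξ₂ : ℂ) ^ 2) • (B 1 1).map Complex.ofReal with hMdef
  set b : ℝ := B 1 1 0 0 with hbdef
  set c : ℝ := B 1 1 1 1 with hcdef
  have hb : θ ≤ b := by
    have h := (hpar' ![0, 1]).1
    simp [Fin.sum_univ_two] at h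
    linarith
  have hc : (0 : ℝ) ≤ c := by
    have h := (hpar' ![0, 1]).2
    simpa [Fin.sum_univ_two] using h
  have hbpos : 0 < b := lt_of_lt_of_le hθ hb
  -- mulVec expansion
  have hmv : ∀ (P : Matrix (Fin 2) (Fin 2) ℂ) (v : Fin 2 → ℂ) (i : Fin 2),
      (P *ᵥ v) i = P i 0 * v 0 + P i 1 * v 1 := by
    intro P v i
    simp [Matrix.mulVec, dotProduct, Fin.sum_univ_two]
  -- differentiability
  have hw1 : Differentiable ℝ w := hw.differentiable two_ne_zero
  have hdw1 : Differentiable ℝ (deriv w) := by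
    have h2 : ContDiff ℝ ((1 : ℕ) + 1) w := by exact_mod_cast hw
    have := (contDiff_succ_iff_deriv.mp h2).2.2
    exact this.differentiable (by norm_num)
  have hwc : ∀ (i : Fin 2) (x : ℝ), HasDerivAt (fun y => w y i) (deriv w x i) x :=
    fun i x => hasDerivAt_pi.mp (hw1 x).hasDerivAt i
  have hdwc : ∀ (i : Fin 2) (x : ℝ), HasDerivAt (fun y => deriv w y i) (deriv (deriv w) x i) x :=
    fun i x => hasDerivAt_pi.mp (hdw1 x).hasDerivAt i
  -- the drift profile
  have htanh : Differentiable ℝ Real.tanh := by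
    have h : Real.tanh = fun t => Real.sinh t / Real.cosh t :=
      funext fun t => Real.tanh_eq_sinh_div_cosh t
    rw [h]
    exact Real.differentiable_sinh.div Real.differentiable_cosh fun t => (Real.cosh_pos t).ne'
  have hf_diff : Differentiable ℝ (fun y => -ε * Real.tanh (ε * y / 2)) := by
    exact ((htanh.comp (((differentiable_id.const_mul ε)).div_const 2))).const_mul (-ε)
  have htanh_bd : ∀ t : ℝ, |Real.tanh t| ≤ 1 := by
    intro t
    rw [Real.tanh_eq_sinh_div_cosh, abs_div, abs_of_pos (Real.cosh_pos t),
      div_le_one (Real.cosh_pos t)]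
    calc |Real.sinh t| = Real.sinh |t| := Real.abs_sinh t
      _ ≤ Real.cosh |t| := (Real.sinh_lt_cosh _).le
      _ = Real.cosh t := Real.cosh_abs t
  have hf_bd : ∀ y : ℝ, |(-ε * Real.tanh (ε * y / 2))| ≤ ε := by
    intro y
    rw [abs_mul, abs_neg, abs_of_pos hε]
    nlinarith [htanh_bd (ε * y / 2), abs_nonneg (Real.tanh (ε * y / 2))]
  set Aw : ℝ → Fin 2 → ℂ := fun y =>
    (Matrix.diagonal ![((-ε * Real.tanh (ε * y / 2) : ℝ) : ℂ), (a : ℂ)]) *ᵥ w y with hAwdef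
  have hAw0 : ∀ y : ℝ, Aw y 0 = ((-ε * Real.tanh (ε * y / 2) : ℝ) : ℂ) * w y 0 := by
    intro y; simp [hAwdef, Matrix.mulVec_diagonal]
  have hAw1 : ∀ y : ℝ, Aw y 1 = (a : ℂ) * w y 1 := by
    intro y; simp [hAwdef, Matrix.mulVec_diagonal]
  have hAwd0 : Differentiable ℝ (fun y => Aw y 0) := by
    simp only [hAw0]
    exact (Complex.ofRealCLM.differentiable.comp hf_diff).mul
      (fun y => (hwc 0 y).differentiableAt)
  have hAwd1 : Differentiable ℝ (fun y => Aw y 1) := by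
    simp only [hAw1]
    exact (differentiable_const _).mul (fun y => (hwc 1 y).differentiableAt)
  have hAw_diff : Differentiable ℝ Aw := by
    rw [differentiable_pi]
    intro i
    match i with
    | 0 => exact hAwd0
    | 1 => exact hAwd1
  -- limits at infinity of components of w and deriv w and Aw
  have hwtop : ∀ i : Fin 2, Tendsto (fun y => w y i) atTop (nhds 0) := by
    intro i; simpa using tendsto_pi_nhds.mp hw0 i
  have hwbot : ∀ i : Fin 2, Tendsto (fun y => w y i) atBot (nhds 0) := by
    intro i; simpa using tendsto_pi_nhds.mp hw0' i
  have hdwtop : ∀ i : Fin 2, Tendsto (fun y => deriv w y i) atTop (nhds 0) := by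
    intro i; simpa using tendsto_pi_nhds.mp hdw0 i
  have hdwbot : ∀ i : Fin 2, Tendsto (fun y => deriv w y i) atBot (nhds 0) := by
    intro i; simpa using tendsto_pi_nhds.mp hdw0' i
  have hAwlim : ∀ (l : Filter ℝ), (∀ i : Fin 2, Tendsto (fun y => w y i) l (nhds 0)) →
      ∀ i : Fin 2, Tendsto (fun y => Aw y i) l (nhds 0) := by
    intro l hl i
    match i with
    | 0 =>
      simp only [hAw0]
      have hlim : Tendsto (fun y => ε * ‖w y 0‖) l (nhds 0) := by
        have := ((hl 0).norm).const_mul ε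
        simpa using this
      refine squeeze_zero_norm (fun y => ?_) hlim
      rw [norm_mul, Complex.norm_real]
      exact mul_le_mul_of_nonneg_right (by simpa [Real.norm_eq_abs, abs_mul] using hf_bd y)
        (norm_nonneg _)
    | 1 =>
      have := (hl 1).const_mul (a : ℂ)
      simpa [hAw1] using this
  -- key: each component of M *ᵥ w x is the derivative of a decaying function
  set g : Fin 2 → ℝ → ℂ := fun i y =>
    (((B 0 0).map Complex.ofReal) i 0 * deriv w y 0
      + ((B 0 0).map Complex.ofReal) i 1 * deriv w y 1)
    - Aw y i
    - (Complex.I * (ξ₂ : ℂ)) * (((B 0 1 + B 1 0).map Complex.ofReal) i 0 * w y 0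
      + ((B 0 1 + B 1 0).map Complex.ofReal) i 1 * w y 1) with hgdef
  have hgd : ∀ (i : Fin 2) (x : ℝ), HasDerivAt (g i) ((M *ᵥ w x) i) x := by
    intro i x
    have hD : HasDerivAt (g i)
        ((((B 0 0).map Complex.ofReal) i 0 * deriv (deriv w) x 0
          + ((B 0 0).map Complex.ofReal) i 1 * deriv (deriv w) x 1)
        - deriv Aw x i
        - (Complex.I * (ξ₂ : ℂ)) * (((B 0 1 + B 1 0).map Complex.ofReal) i 0 * deriv w x 0
          + ((B 0 1 + B 1 0).map Complex.ofReal) i 1 * deriv w x 1)) x := by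
      have hA : HasDerivAt (fun y => Aw y i) (deriv Aw x i) x :=
        hasDerivAt_pi.mp (hAw_diff x).hasDerivAt i
      exact ((((hdwc 0 x).const_mul _).add ((hdwc 1 x).const_mul _)).sub hA).sub
        ((((hwc 0 x).const_mul _).add ((hwc 1 x).const_mul _)).const_mul _)
    have h := congrFun (heq x) i
    simp only [Pi.add_apply, Pi.smul_apply, smul_eq_mul, hmv] at h
    rw [hmv]
    convert hD using 1
    linear_combination h
  have hMint : ∀ i : Fin 2, Integrable (fun x => (M *ᵥ w x) i) volume := by
    intro i
    simp only [hmv]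
    exact ((hwInt 0).const_mul _).add ((hwInt 1).const_mul _)
  have hglim : ∀ (l : Filter ℝ), (∀ i : Fin 2, Tendsto (fun y => w y i) l (nhds 0)) →
      (∀ i : Fin 2, Tendsto (fun y => deriv w y i) l (nhds 0)) →
      ∀ i : Fin 2, Tendsto (g i) l (nhds 0) := by
    intro l h0 h1 i
    have := ((((h1 0).const_mul (((B 0 0).map Complex.ofReal) i 0)).add
        ((h1 1).const_mul (((B 0 0).map Complex.ofReal) i 1))).sub (hAwlim l h0 i)).sub
      ((((h0 0).const_mul (((B 0 1 + B 1 0).map Complex.ofReal) i 0)).add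
        ((h0 1).const_mul (((B 0 1 + B 1 0).map Complex.ofReal) i 1))).const_mul
        (Complex.I * (ξ₂ : ℂ)))
    simpa [hgdef] using this
  have hint0 : ∀ i : Fin 2, (∫ x : ℝ, (M *ᵥ w x) i) = 0 := by
    intro i
    have := integral_of_hasDerivAt_of_tendsto (fun x => hgd i x) (hMint i)
      (hglim atBot hwbot hdwbot i) (hglim atTop hwtop hdwtop i)
    simpa using this
  -- first conclusion
  have mass : M *ᵥ (fun i => ∫ x : ℝ, w x i) = 0 := by
    funext i
    have hcomm : (fun x => M i 0 * w x 0 + M i 1 * w x 1) = fun x => (M *ᵥ w x) i :=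
      funext fun x => (hmv M (w x) i).symm
    have : (∫ x : ℝ, (M i 0 * w x 0 + M i 1 * w x 1)) = 0 := by
      rw [hcomm]; exact hint0 i
    rw [integral_add ((hwInt 0).const_mul _) ((hwInt 1).const_mul _),
      integral_const_mul, integral_const_mul] at this
    simpa [hmv] using this
  refine ⟨mass, ?_⟩
  -- entries of M
  have hM00 : M 0 0 = lam + (ξ₂ : ℂ) ^ 2 * (b : ℂ) := by
    simp [hMdef, hbdef, Matrix.one_apply]
  have hM11 : M 1 1 = lam + (ξ₂ : ℂ) ^ 2 * (c : ℂ) := by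
    simp [hMdef, hcdef, Matrix.one_apply]
  have hM01 : M 0 1 = Complex.I * (ξ₂ : ℂ) := by
    have hz : B 1 1 0 1 = 0 := hBdiag 1 1 (by decide)
    simp [hMdef, Matrix.one_apply, hz]
  have hM10 : M 1 0 = Complex.I * (ξ₂ : ℂ) := by
    have hz : B 1 1 1 0 = 0 := hBdiag 1 1 (by decide)
    simp [hMdef, Matrix.one_apply, hz]
  set u : ℂ := ∫ x : ℝ, w x 0 with hudef
  set v : ℂ := ∫ x : ℝ, w x 1 with hvdef
  have e0 : (lam + (ξ₂ : ℂ) ^ 2 * (b : ℂ)) * u + (Complex.I * (ξ₂ : ℂ)) * v = 0 := by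
    have h := congrFun mass 0
    rw [hmv] at h
    rw [← hM00, ← hM01]
    simpa using h
  have e1 : (Complex.I * (ξ₂ : ℂ)) * u + (lam + (ξ₂ : ℂ) ^ 2 * (c : ℂ)) * v = 0 := by
    have h := congrFun mass 1
    rw [hmv] at h
    rw [← hM10, ← hM11]
    simpa using h
  set d : ℂ := (lam + (ξ₂ : ℂ) ^ 2 * (b : ℂ)) * (lam + (ξ₂ : ℂ) ^ 2 * (c : ℂ)) + (ξ₂ : ℂ) ^ 2
    with hddef
  have hd : d ≠ 0 := by
    intro h0
    by_cases hxi : ξ₂ = 0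
    · subst hxi
      rw [hddef] at h0
      simp at h0
      exact hne ⟨rfl, h0⟩
    · have hform : d = (lam + ((ξ₂ ^ 2 * b : ℝ) : ℂ)) * (lam + ((ξ₂ ^ 2 * c : ℝ) : ℂ))
          + ((ξ₂ ^ 2 : ℝ) : ℂ) := by
        rw [hddef]; push_cast; ring
      rw [hform] at h0
      have hre2 := congrArg Complex.re h0
      have him2 := congrArg Complex.im h0
      simp only [← Complex.ofReal_pow, Complex.add_re, Complex.add_im, Complex.mul_re,
        Complex.mul_im, Complex.ofReal_re, Complex.ofReal_im, Complex.zero_re, Complex.zero_im,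
        mul_zero, zero_mul, add_zero, zero_add, sub_zero] at hre2 him2
      have hP : 0 < ξ₂ ^ 2 * b := by positivity
      have hQ : 0 ≤ ξ₂ ^ 2 * c := by positivity
      have hR : 0 < ξ₂ ^ 2 := by positivity
      have him3 : lam.im * ((lam.re + ξ₂ ^ 2 * b) + (lam.re + ξ₂ ^ 2 * c)) = 0 := by
        linear_combination him2
      have hzero : lam.im = 0 := by
        rcases mul_eq_zero.mp him3 with h | h
        · exact h
        · linarith
      rw [hzero] at hre2
      nlinarith [mul_nonneg (by linarith : (0:ℝ) ≤ lam.re + ξ₂ ^ 2 * b)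
        (by linarith : (0:ℝ) ≤ lam.re + ξ₂ ^ 2 * c)]
  have hu : u = 0 := by
    have hdu : d * u = 0 := by
      rw [hddef]
      linear_combination (lam + (ξ₂ : ℂ) ^ 2 * (c : ℂ)) * e0 - (Complex.I * (ξ₂ : ℂ)) * e1 +
        (ξ₂ : ℂ) ^ 2 * u * Complex.I_sq
    exact (mul_eq_zero.mp hdu).resolve_left hd
  have hv : v = 0 := by
    have hdv : d * v = 0 := by
      rw [hddef]
      linear_combination (lam + (ξ₂ : ℂ) ^ 2 * (b : ℂ)) * e1 - (Complex.I * (ξ₂ : ℂ)) * e0 +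
        (ξ₂ : ℂ) ^ 2 * v * Complex.I_sq
    exact (mul_eq_zero.mp hdv).resolve_left hd
  funext i
  match i with
  | 0 => exact hu
  | 1 => exact hv
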